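/- Let φ(z) = (az+b)/(cz+d) (a,b,c,d ∈ ℂ, ad−bc ≠ 0) be a linear fractional self-map of the open unit disk 𝔻, and let μ ∈ ℂ with |μ| = 1. Then the composition operator C_φ on the Hardy space H² is J_μ-normal if and only if C_φ is normal (equivalently, if and only if φ(z) = αz for some α ∈ ℂ with |α| ≤ 1). -/

import Mathlib

open scoped ComplexConjugate InnerProductSpace ENNReal NNReal
open Complex Metric

noncomputable section

abbrev H2 : Type := lp (fun _ : ℕ => ℂ) 2

namespace H2

/-- Evaluation of an element of `H²` (given by its sequence of Taylor coefficients)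
at a point `z` of the unit disk: `f(z) = ∑ aₙ zⁿ`. -/
def eval (f : H2) (z : ℂ) : ℂ := ∑' n : ℕ, (f : ∀ _ : ℕ, ℂ) n * z ^ n

/-- The Szegő kernel function `K_w(z) = 1/(1 - conj w * z)`. -/
def ker (w z : ℂ) : ℂ := (1 - conj w * z)⁻¹

lemma kernel_memℓp (w : ℂ) (hw : ‖w‖ < 1) :
    Memℓp (fun n : ℕ => (conj w) ^ n) 2 := by
  apply memℓp_gen
  have hsum : Summable (fun n : ℕ => (‖w‖ ^ 2) ^ n) :=
    summable_geometric_of_lt_one (by positivity) (by nlinarith [norm_nonneg w])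
  refine hsum.congr fun n => ?_
  have h2 : ((2 : ℝ≥0∞).toReal) = ((2 : ℕ) : ℝ) := by simp
  rw [h2, Real.rpow_natCast]
  simp [norm_pow, ← pow_mul, Nat.mul_comm]

/-- The reproducing kernel of `H²` at `w` in the unit disk, as an element of `H²`. -/
def kernel (w : ℂ) : H2 :=
  if hw : ‖w‖ < 1 then ⟨fun n : ℕ => (conj w) ^ n, kernel_memℓp w hw⟩ else 0

/-- `T` is the composition operator `C_φ` on `H²`. -/
def IsCompOp (φ : ℂ → ℂ) (T : H2 →L[ℂ] H2) : Prop :=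
  ∀ f : H2, ∀ z : ℂ, ‖z‖ < 1 → eval (T f) z = eval f (φ z)

/-- `W` is the weighted composition operator `W_{ψ,φ}` on `H²`. -/
def IsWCompOp (ψ φ : ℂ → ℂ) (W : H2 →L[ℂ] H2) : Prop :=
  ∀ f : H2, ∀ z : ℂ, ‖z‖ < 1 → eval (W f) z = ψ z * eval f (φ z)

/-- A conjugation on `H²`: a conjugate-linear involution satisfying `⟪Cx, Cy⟫ = ⟪y, x⟫`. -/
structure IsConjugation (C : H2 → H2) : Prop where
  map_add : ∀ x y : H2, C (x + y) = C x + C y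
  map_smul : ∀ (c : ℂ) (x : H2), C (c • x) = conj c • C x
  invol : ∀ x : H2, C (C x) = x
  inner_conj : ∀ x y : H2, ⟪C x, C y⟫_ℂ = ⟪y, x⟫_ℂ

/-- `T` is `C`-normal: `C T* T C = T T*`. -/
def CNormal (C : H2 → H2) (T : H2 →L[ℂ] H2) : Prop :=
  ∀ x : H2, C ((ContinuousLinearMap.adjoint T) (T (C x)))
      = T ((ContinuousLinearMap.adjoint T) x)

/-- `T` is a normal operator: `T* T = T T*`. -/
def IsNormalOp (T : H2 →L[ℂ] H2) : Prop :=
  (ContinuousLinearMap.adjoint T).comp T = T.comp (ContinuousLinearMap.adjoint T)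

/-- `T` is a unitary operator. -/
def IsUnitaryOp (T : H2 →L[ℂ] H2) : Prop :=
  T.comp (ContinuousLinearMap.adjoint T) = ContinuousLinearMap.id ℂ H2 ∧
  (ContinuousLinearMap.adjoint T).comp T = ContinuousLinearMap.id ℂ H2

/-- `C` is the conjugation `J_μ` on `H²`: `(J_μ f)(z) = conj (f (μ * conj z))`. -/
def IsJmu (μ : ℂ) (C : H2 → H2) : Prop :=
  ∀ f : H2, ∀ z : ℂ, ‖z‖ < 1 → eval (C f) z = conj (eval f (μ * conj z))

/-- `ξ_p(z) = √(1-|p|²) / (1 - conj p * z)`. -/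
def xi (p z : ℂ) : ℂ := (Real.sqrt (1 - ‖p‖ ^ 2) : ℂ) / (1 - conj p * z)

/-- `τ_p(z) = λ (p - z) / (1 - conj p * z)`. -/
def tau (p lam z : ℂ) : ℂ := lam * (p - z) / (1 - conj p * z)

/-- `C` is the conjugation `J W_{ξ_p, τ_p}` on `H²`:
`(C f)(z) = conj (ξ_p(conj z) * f (τ_p (conj z)))`. -/
def IsJW (p lam : ℂ) (C : H2 → H2) : Prop :=
  ∀ f : H2, ∀ z : ℂ, ‖z‖ < 1 →
    eval (C f) z = conj (xi p (conj z) * eval f (tau p lam (conj z)))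

end H2

namespace H2

/-- coefficients of the kernel -/
lemma kernel_apply {w : ℂ} (hw : ‖w‖ < 1) (n : ℕ) :
    (kernel w : ∀ _ : ℕ, ℂ) n = (conj w) ^ n := by
  rw [kernel, dif_pos hw]

lemma coeff_norm_le (f : H2) (n : ℕ) : ‖(f : ∀ _ : ℕ, ℂ) n‖ ≤ ‖f‖ :=
  lp.norm_apply_le_norm (by norm_num) f n

lemma summable_eval (f : H2) {z : ℂ} (hz : ‖z‖ < 1) :
    Summable (fun n : ℕ => (f : ∀ _ : ℕ, ℂ) n * z ^ n) := by
  refine Summable.of_norm ?_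
  refine Summable.of_nonneg_of_le (fun n => norm_nonneg _) (fun n => ?_)
    ((summable_geometric_of_lt_one (norm_nonneg z) hz).mul_left ‖f‖)
  rw [norm_mul, norm_pow]
  exact mul_le_mul_of_nonneg_right (coeff_norm_le f n) (by positivity)

lemma hasSum_eval (f : H2) {z : ℂ} (hz : ‖z‖ < 1) :
    HasSum (fun n : ℕ => (f : ∀ _ : ℕ, ℂ) n * z ^ n) (eval f z) :=
  (summable_eval f hz).hasSum

/-- `eval f` has the obvious power series on the unit ball. -/
lemma hasFPowerSeries_eval (f : H2) :
    HasFPowerSeriesOnBall (eval f)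
      (FormalMultilinearSeries.ofScalars ℂ (fun n => (f : ∀ _ : ℕ, ℂ) n)) 0 1 := by
  constructor
  · refine ENNReal.le_of_forall_nnreal_lt (fun r hr => ?_)
    refine FormalMultilinearSeries.le_radius_of_bound _ ‖f‖ (fun n => ?_)
    rw [FormalMultilinearSeries.ofScalars_norm]
    have hr' : r < 1 := ENNReal.coe_lt_one_iff.mp hr
    have hr1 : (r : ℝ) ^ n ≤ 1 := pow_le_one₀ r.coe_nonneg (by exact_mod_cast hr'.le)
    calc ‖(f : ∀ _ : ℕ, ℂ) n‖ * (r:ℝ) ^ n ≤ ‖f‖ * 1 :=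
          mul_le_mul (coeff_norm_le f n) hr1 (by positivity) (norm_nonneg f)
      _ = ‖f‖ := mul_one _
  · exact one_pos
  · intro y hy
    rw [EMetric.mem_ball, edist_zero_right] at hy
    have hy' : ‖y‖ < 1 := by
      have : ‖y‖₊ < 1 := by rw [enorm_eq_nnnorm] at hy; exact_mod_cast hy
      exact_mod_cast this
    simp only [FormalMultilinearSeries.ofScalars_apply_eq, zero_add, smul_eq_mul]
    exact hasSum_eval f hy'

lemma coeff_eq_of_hasFPowerSeriesAt {f : H2} {c : ℕ → ℂ}
    (h : HasFPowerSeriesAt (eval f) (FormalMultilinearSeries.ofScalars ℂ c) 0) :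
    ∀ n, (f : ∀ _ : ℕ, ℂ) n = c n := by
  have h2 := (hasFPowerSeries_eval f).hasFPowerSeriesAt
  have := h.eq_formalMultilinearSeries h2
  have := FormalMultilinearSeries.ofScalars_series_injective ℂ ℂ this
  exact fun n => (congrFun this n).symm

/-- coefficient extraction from an eventual identity of evals -/
lemma coeff_eq_of_eventually {f : H2} {c : ℕ → ℂ} {F : ℂ → ℂ}
    (hF : HasFPowerSeriesAt F (FormalMultilinearSeries.ofScalars ℂ c) 0)
    (h : ∀ᶠ z in nhds (0 : ℂ), eval f z = F z) :
    ∀ n, (f : ∀ _ : ℕ, ℂ) n = c n :=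
  coeff_eq_of_hasFPowerSeriesAt (hF.congr (by filter_upwards [h] with z hz using hz.symm))

lemma eval_inj {f g : H2} (h : ∀ z : ℂ, ‖z‖ < 1 → eval f z = eval g z) : f = g := by
  have hg := (hasFPowerSeries_eval g).hasFPowerSeriesAt
  have hev : ∀ᶠ z in nhds (0 : ℂ), eval f z = eval g z := by
    filter_upwards [Metric.ball_mem_nhds (0:ℂ) one_pos] with z hz
    exact h z (by simpa using hz)
  have := coeff_eq_of_eventually hg hev
  exact lp.ext (funext this)

end H2
namespace H2

/-- Coefficients `u, v, v k, v k², …` -/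
def geomCoeff (u v k : ℂ) : ℕ → ℂ := fun n => if n = 0 then u else v * k ^ (n - 1)

lemma hasSum_geom (u v k : ℂ) {z : ℂ} (h : ‖k * z‖ < 1) :
    HasSum (fun n => geomCoeff u v k n * z ^ n) (u + v * z / (1 - k * z)) := by
  have h1 : HasSum (fun n : ℕ => (v * z) * (k * z) ^ n) ((v * z) * (1 - k * z)⁻¹) :=
    (hasSum_geometric_of_norm_lt_one h).mul_left _
  have h2 : HasSum (fun n : ℕ => geomCoeff u v k (n + 1) * z ^ (n + 1))
      ((v * z) * (1 - k * z)⁻¹) := by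
    refine h1.congr_fun fun n => ?_
    simp only [geomCoeff, Nat.add_sub_cancel, if_neg (Nat.succ_ne_zero n)]
    ring
  have := (hasSum_nat_add_iff (f := fun n => geomCoeff u v k n * z ^ n) 1).mp h2
  simpa [geomCoeff, div_eq_mul_inv, add_comm, mul_comm, mul_assoc] using this

lemma hasFPowerSeriesAt_geom (u v k : ℂ) :
    HasFPowerSeriesAt (fun z => u + v * z / (1 - k * z))
      (FormalMultilinearSeries.ofScalars ℂ (geomCoeff u v k)) 0 := by
  refine ⟨((‖k‖₊ + 1)⁻¹ : ℝ≥0), ?_, ?_, ?_⟩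
  · refine FormalMultilinearSeries.le_radius_of_bound _ (‖u‖ + ‖v‖) (fun n => ?_)
    rw [FormalMultilinearSeries.ofScalars_norm]
    have hkr : ‖k‖ * ((‖k‖ + 1)⁻¹) ≤ 1 := by
      rw [mul_inv_le_iff₀ (by positivity)]; linarith [norm_nonneg k]
    have hr1 : ((‖k‖ + 1)⁻¹ : ℝ) ≤ 1 := by
      rw [inv_le_one_iff₀]; right; linarith [norm_nonneg k]
    have hrpos : (0:ℝ) ≤ (‖k‖ + 1)⁻¹ := by positivity
    have hcoe : (((‖k‖₊ + 1)⁻¹ : ℝ≥0) : ℝ) = (‖k‖ + 1)⁻¹ := by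
      push_cast [coe_nnnorm]; rfl
    rw [hcoe]
    match n with
    | 0 => simpa [geomCoeff] using le_add_of_nonneg_right (norm_nonneg v)
    | (m+1) =>
      simp only [geomCoeff, if_neg (Nat.succ_ne_zero m), Nat.add_sub_cancel]
      have : ‖v * k ^ m‖ * ((‖k‖ + 1)⁻¹) ^ (m + 1)
          ≤ ‖v‖ * ((‖k‖ * (‖k‖ + 1)⁻¹) ^ m * (‖k‖ + 1)⁻¹) := by
        rw [norm_mul, norm_pow, pow_succ, mul_pow]; ring_nf; rfl
      refine le_add_of_nonneg_left (norm_nonneg u) |>.trans' ?_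
      calc ‖v * k ^ m‖ * ((‖k‖ + 1)⁻¹) ^ (m + 1)
          ≤ ‖v‖ * ((‖k‖ * (‖k‖ + 1)⁻¹) ^ m * (‖k‖ + 1)⁻¹) := this
        _ ≤ ‖v‖ * (1 * 1) := by
            refine mul_le_mul_of_nonneg_left ?_ (norm_nonneg v)
            exact mul_le_mul (pow_le_one₀ (by positivity) hkr) hr1 hrpos zero_le_one
        _ = ‖v‖ := by ring
  · simp
  · intro y hy
    rw [EMetric.mem_ball, edist_zero_right] at hy
    have hy' : ‖y‖ < (‖k‖ + 1)⁻¹ := by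
      have h1 : ‖y‖₊ < (‖k‖₊ + 1)⁻¹ := by exact_mod_cast hy
      have := (NNReal.coe_lt_coe).mpr h1
      push_cast [coe_nnnorm] at this
      convert this using 2
    have hky : ‖k * y‖ < 1 := by
      rw [norm_mul]
      calc ‖k‖ * ‖y‖ ≤ (‖k‖ + 1) * ‖y‖ := by nlinarith [norm_nonneg y]
        _ < (‖k‖ + 1) * (‖k‖ + 1)⁻¹ := by
            exact mul_lt_mul_of_pos_left hy' (by positivity)
        _ = 1 := mul_inv_cancel₀ (by positivity)
    simp only [FormalMultilinearSeries.ofScalars_apply_eq, zero_add, smul_eq_mul]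
    exact hasSum_geom u v k hky

lemma eval_kernel {w : ℂ} (hw : ‖w‖ < 1) {v : ℂ} (hv : ‖v‖ < 1) :
    eval (kernel w) v = (1 - conj w * v)⁻¹ := by
  have h : ‖conj w * v‖ < 1 := by
    rw [norm_mul, RCLike.norm_conj]
    calc ‖w‖ * ‖v‖ ≤ 1 * ‖v‖ := mul_le_mul_of_nonneg_right hw.le (norm_nonneg v)
      _ = ‖v‖ := one_mul _
      _ < 1 := hv
  rw [eval, ← tsum_geometric_of_norm_lt_one h]
  exact tsum_congr fun n => by rw [kernel_apply hw, mul_pow]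

lemma norm_kernel_sq {v : ℂ} (hv : ‖v‖ < 1) :
    ‖kernel v‖ ^ 2 = (1 - ‖v‖ ^ 2)⁻¹ := by
  have h2 : (0:ℝ) < (2 : ℝ≥0∞).toReal := by norm_num
  have := lp.norm_rpow_eq_tsum h2 (kernel v)
  have h2' : ((2 : ℝ≥0∞).toReal) = ((2:ℕ):ℝ) := by norm_num
  rw [h2'] at this
  rw [Real.rpow_natCast] at this
  have hv2 : ‖v‖ ^ 2 < 1 := by nlinarith [norm_nonneg v]
  rw [show ((2:ℕ):ℝ) = (2:ℝ) by norm_num] at this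
  rw [this, ← tsum_geometric_of_lt_one (by positivity) hv2]
  refine tsum_congr fun n => ?_
  rw [kernel_apply hv, Real.rpow_two, norm_pow, RCLike.norm_conj, ← pow_mul, ← pow_mul,
    Nat.mul_comm]

end H2
namespace H2

lemma inner_eq_tsum' (f g : H2) : ⟪f, g⟫_ℂ = ∑' n, conj ((f : ∀ _ : ℕ, ℂ) n) * (g : ∀ _ : ℕ, ℂ) n := by
  rw [lp.inner_eq_tsum]; exact tsum_congr fun n => by simp [RCLike.inner_apply, mul_comm]

lemma eval_eq_inner (f : H2) {w : ℂ} (hw : ‖w‖ < 1) :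
    ⟪kernel w, f⟫_ℂ = eval f w := by
  rw [inner_eq_tsum', eval]
  refine tsum_congr fun n => ?_
  rw [kernel_apply hw, map_pow, Complex.conj_conj, mul_comm]

lemma adjoint_kernel {φ : ℂ → ℂ} {T : H2 →L[ℂ] H2} (hT : IsCompOp φ T)
    (hself : ∀ z : ℂ, ‖z‖ < 1 → ‖φ z‖ < 1) {w : ℂ} (hw : ‖w‖ < 1) :
    (ContinuousLinearMap.adjoint T) (kernel w) = kernel (φ w) := by
  refine ext_inner_right ℂ fun g => ?_
  rw [ContinuousLinearMap.adjoint_inner_left, eval_eq_inner _ hw, eval_eq_inner _ (hself w hw),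
    hT g w hw]

/-- `T K₀ = K₀` for a composition operator. -/
lemma comp_kernel_zero {φ : ℂ → ℂ} {T : H2 →L[ℂ] H2} (hT : IsCompOp φ T)
    (hself : ∀ z : ℂ, ‖z‖ < 1 → ‖φ z‖ < 1) :
    T (kernel 0) = kernel 0 := by
  refine eval_inj fun z hz => ?_
  rw [hT _ z hz, eval_kernel (by norm_num) (hself z hz), eval_kernel (by norm_num) hz]
  simp

lemma eval_comp_kernel {φ : ℂ → ℂ} {T : H2 →L[ℂ] H2} (hT : IsCompOp φ T)
    (hself : ∀ z : ℂ, ‖z‖ < 1 → ‖φ z‖ < 1) {w : ℂ} (hw : ‖w‖ < 1)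
    {z : ℂ} (hz : ‖z‖ < 1) :
    eval (T (kernel w)) z = (1 - conj w * φ z)⁻¹ := by
  rw [hT _ z hz, eval_kernel hw (hself z hz)]

lemma conj_tsum {f : ℕ → ℂ} : conj (∑' n, f n) = ∑' n, conj (f n) := by
  by_cases h : Summable f
  · exact (h.hasSum.star.tsum_eq).symm
  · rw [tsum_eq_zero_of_not_summable h, tsum_eq_zero_of_not_summable, map_zero]
    intro hs
    exact h (by simpa [Complex.conj_conj] using hs.star)

/-- `J_μ` sends `K_w` to `K_{μ conj w}`. -/
lemma conj_kernel {μ : ℂ} (hμ : ‖μ‖ = 1) {C : H2 → H2} (hCμ : IsJmu μ C)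
    {w : ℂ} (hw : ‖w‖ < 1) : C (kernel w) = kernel (μ * conj w) := by
  have hw' : ‖μ * conj w‖ < 1 := by rw [norm_mul, hμ, RCLike.norm_conj, one_mul]; exact hw
  refine eval_inj fun z hz => ?_
  have hz' : ‖μ * conj z‖ < 1 := by rw [norm_mul, hμ, RCLike.norm_conj, one_mul]; exact hz
  rw [hCμ _ z hz, eval_kernel hw hz', eval_kernel hw' hz, map_inv₀]
  congr 1
  simp only [map_sub, map_mul, map_one, Complex.conj_conj]
  ring

/-- normality gives `‖T x‖ = ‖T* x‖`. -/
lemma norm_adjoint_eq_of_normal {T : H2 →L[ℂ] H2} (h : IsNormalOp T) (x : H2) :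
    ‖T x‖ = ‖(ContinuousLinearMap.adjoint T) x‖ := by
  have h1 : ((‖T x‖ : ℂ)) ^ 2 = ⟪(ContinuousLinearMap.adjoint T) (T x), x⟫_ℂ := by
    rw [ContinuousLinearMap.adjoint_inner_left, inner_self_eq_norm_sq_to_K]
    norm_cast
  have key : ⟪T ((ContinuousLinearMap.adjoint T) x), x⟫_ℂ
      = ⟪(ContinuousLinearMap.adjoint T) x, (ContinuousLinearMap.adjoint T) x⟫_ℂ := by
    have key' := ContinuousLinearMap.adjoint_inner_left
      (ContinuousLinearMap.adjoint T) x ((ContinuousLinearMap.adjoint T) x)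
    rwa [ContinuousLinearMap.adjoint_adjoint] at key'
  have h2 : ((‖(ContinuousLinearMap.adjoint T) x‖ : ℂ)) ^ 2
      = ⟪T ((ContinuousLinearMap.adjoint T) x), x⟫_ℂ := by
    rw [key, inner_self_eq_norm_sq_to_K]
    norm_cast
  have h3 : ((‖T x‖ : ℂ)) ^ 2 = ((‖(ContinuousLinearMap.adjoint T) x‖ : ℂ)) ^ 2 := by
    rw [h1, h2, ← ContinuousLinearMap.comp_apply, ← ContinuousLinearMap.comp_apply, h]
  have h4 : (‖T x‖ : ℝ) ^ 2 = (‖(ContinuousLinearMap.adjoint T) x‖ : ℝ) ^ 2 := by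
    exact_mod_cast h3
  calc ‖T x‖ = Real.sqrt (‖T x‖ ^ 2) := (Real.sqrt_sq (norm_nonneg _)).symm
    _ = Real.sqrt (‖(ContinuousLinearMap.adjoint T) x‖ ^ 2) := by rw [h4]
    _ = ‖(ContinuousLinearMap.adjoint T) x‖ := Real.sqrt_sq (norm_nonneg _)

end H2
namespace H2

lemma norm_comp_conj_of_cnormal {T : H2 →L[ℂ] H2} {C : H2 → H2}
    (hC : IsConjugation C) (h : CNormal C T) (x : H2) :
    ‖T (C x)‖ = ‖(ContinuousLinearMap.adjoint T) x‖ := by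
  set T' := ContinuousLinearMap.adjoint T with hT'
  have e1 : ((‖T (C x)‖ : ℂ)) ^ 2 = ⟪T' (T (C x)), C x⟫_ℂ := by
    rw [hT', ContinuousLinearMap.adjoint_inner_left, inner_self_eq_norm_sq_to_K]
    norm_cast
  have e2 : ⟪C (T' (T (C x))), x⟫_ℂ = ((‖T (C x)‖ : ℂ)) ^ 2 := by
    calc ⟪C (T' (T (C x))), x⟫_ℂ = ⟪C (T' (T (C x))), C (C x)⟫_ℂ := by rw [hC.invol]
      _ = ⟪C x, T' (T (C x))⟫_ℂ := hC.inner_conj _ _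
      _ = conj ⟪T' (T (C x)), C x⟫_ℂ := by rw [← inner_conj_symm]
      _ = conj (((‖T (C x)‖ : ℂ)) ^ 2) := by rw [← e1]
      _ = ((‖T (C x)‖ : ℂ)) ^ 2 := by rw [map_pow, Complex.conj_ofReal]
  have e3 : ⟪T (T' x), x⟫_ℂ = ((‖T' x‖ : ℂ)) ^ 2 := by
    have key := ContinuousLinearMap.adjoint_inner_left T' x (T' x)
    rw [show ContinuousLinearMap.adjoint T' = T by
      rw [hT', ContinuousLinearMap.adjoint_adjoint]] at key
    rw [key, inner_self_eq_norm_sq_to_K]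
    norm_cast
  have e4 : ((‖T (C x)‖ : ℂ)) ^ 2 = ((‖T' x‖ : ℂ)) ^ 2 := by
    rw [← e2, h x, e3]
  have h4 : (‖T (C x)‖ : ℝ) ^ 2 = (‖T' x‖ : ℝ) ^ 2 := by exact_mod_cast e4
  calc ‖T (C x)‖ = Real.sqrt (‖T (C x)‖ ^ 2) := (Real.sqrt_sq (norm_nonneg _)).symm
    _ = Real.sqrt (‖T' x‖ ^ 2) := by rw [h4]
    _ = ‖T' x‖ := Real.sqrt_sq (norm_nonneg _)

lemma one_sub_ne_zero_of_norm_lt_one {x : ℂ} (h : ‖x‖ < 1) : 1 - x ≠ 0 := by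
  intro hx
  have : x = 1 := by linear_combination -hx
  rw [this] at h; simp at h

lemma sq_norm_complex (z : ℂ) : ‖z‖ ^ 2 = z.re ^ 2 + z.im ^ 2 := by
  rw [Complex.sq_norm, Complex.normSq_apply]; ring

lemma parallelogram (x y : ℂ) : ‖x + y‖ ^ 2 + ‖-x + y‖ ^ 2 = 2 * (‖x‖ ^ 2 + ‖y‖ ^ 2) := by
  simp only [sq_norm_complex, Complex.add_re, Complex.add_im, Complex.neg_re, Complex.neg_im]
  ring

/-- The main linearization argument. -/
lemma linear_of_norm_eq (a b c d : ℂ) (φ : ℂ → ℂ)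
    (hφ : ∀ z : ℂ, φ z = (a * z + b) / (c * z + d))
    (hdet : a * d - b * c ≠ 0)
    (hden : ∀ z : ℂ, ‖z‖ < 1 → c * z + d ≠ 0)
    (hself : ∀ z : ℂ, ‖z‖ < 1 → ‖φ z‖ < 1)
    (T : H2 →L[ℂ] H2) (hT : IsCompOp φ T)
    (ν : ℂ → ℂ) (hν1 : ∀ w, ‖ν w‖ = ‖w‖) (hν2 : ∀ w, ν (-w) = - ν w)
    (H : ∀ w : ℂ, ‖w‖ < 1 → ‖T (kernel w)‖ = ‖kernel (φ (ν w))‖) :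
    ∃ α : ℂ, ‖α‖ ≤ 1 ∧ ∀ z : ℂ, ‖z‖ < 1 → φ z = α * z := by
  have hd : d ≠ 0 := by have := hden 0 (by norm_num); simpa using this
  -- Step A : φ 0 = 0, hence b = 0
  have hν0 : ν 0 = 0 := norm_eq_zero.mp (by rw [hν1]; simp)
  have hφ00 : φ 0 = 0 := by
    have h0 := H 0 (by norm_num)
    rw [comp_kernel_zero hT hself, hν0] at h0
    have hs0 : ‖kernel (0:ℂ)‖ ^ 2 = 1 := by
      rw [norm_kernel_sq (by norm_num)]; simp
    have hsφ : ‖kernel (φ 0)‖ ^ 2 = (1 - ‖φ 0‖ ^ 2)⁻¹ :=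
      norm_kernel_sq (hself 0 (by norm_num))
    have ht : ‖φ 0‖ < 1 := hself 0 (by norm_num)
    have heq : (1 - ‖φ 0‖ ^ 2)⁻¹ = 1 := by rw [← hsφ, ← h0, hs0]
    have h1 : (1:ℝ) - ‖φ 0‖ ^ 2 = 1 := by
      rw [← inv_inv ((1:ℝ) - ‖φ 0‖ ^ 2), heq, inv_one]
    have h2 : ‖φ 0‖ ^ 2 = 0 := by linarith
    exact norm_eq_zero.mp (pow_eq_zero_iff two_ne_zero |>.mp h2)
  have hb : b = 0 := by
    have h := hφ 0
    rw [hφ00] at h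
    simp only [mul_zero, zero_add] at h
    have : b / d = 0 := h.symm
    exact (div_eq_zero_iff.mp this).resolve_right hd
  have ha : a ≠ 0 := by
    intro h; rw [h, hb] at hdet; simp at hdet
  -- Step B : the key identity E(w)
  have E : ∀ w : ℂ, ‖w‖ < 1 → w ≠ 0 →
      ‖c * ν w + d‖ ^ 2 - ‖a * w‖ ^ 2 = ‖d‖ ^ 2 - ‖conj w * a - c‖ ^ 2 := by
    intro w hw hw0
    set k : ℂ := (conj w * a - c) / d with hk_def
    set β : ℂ := conj w * a / d with hβ_def
    have hβ0 : β ≠ 0 := by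
      rw [hβ_def]
      exact div_ne_zero (mul_ne_zero (by simpa using hw0) ha) hd
    -- coefficients of T K_w
    have hco : ∀ n, (T (kernel w) : ∀ _ : ℕ, ℂ) n = geomCoeff 1 β k n := by
      refine coeff_eq_of_eventually (hasFPowerSeriesAt_geom 1 β k) ?_
      filter_upwards [Metric.ball_mem_nhds (0:ℂ) one_pos] with z hz'
      have hz : ‖z‖ < 1 := by simpa using hz'
      rw [eval_comp_kernel hT hself hw hz]
      have hcd : c * z + d ≠ 0 := hden z hz
      have hφz : φ z = a * z / (c * z + d) := by rw [hφ z, hb]; ring_nf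
      have h1 : 1 - conj w * φ z ≠ 0 := by
        refine one_sub_ne_zero_of_norm_lt_one ?_
        rw [norm_mul, RCLike.norm_conj]
        calc ‖w‖ * ‖φ z‖ ≤ 1 * ‖φ z‖ :=
              mul_le_mul_of_nonneg_right hw.le (norm_nonneg _)
          _ = ‖φ z‖ := one_mul _
          _ < 1 := hself z hz
      have hA : 1 - conj w * φ z = ((c*z+d) - conj w * (a*z))/(c*z+d) := by
        rw [hφz, eq_div_iff hcd, sub_mul, mul_assoc, div_mul_cancel₀ _ hcd, one_mul]
      have hnum : (c*z+d) - conj w * (a*z) ≠ 0 := by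
        intro h0
        exact h1 (by rw [hA, h0, zero_div])
      have hkz2 : 1 - k * z = ((c*z+d) - conj w * (a*z))/d := by
        rw [hk_def]; field_simp; ring
      rw [hA, hkz2, hβ_def]
      rw [inv_div]
      field_simp
      linear_combination mul_inv_cancel₀ hnum
    -- |k| < 1
    have hmem : Memℓp (geomCoeff 1 β k) 2 := by
      have hm := lp.memℓp (T (kernel w))
      rwa [show ((T (kernel w)) : ∀ _ : ℕ, ℂ) = geomCoeff 1 β k from funext hco] at hm
    have htoReal : (0:ℝ) < (2 : ℝ≥0∞).toReal := by norm_num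
    have hsum2 : Summable (fun n => ‖geomCoeff 1 β k n‖ ^ ((2:ℝ≥0∞).toReal)) :=
      (memℓp_gen_iff htoReal).mp hmem
    have hk : ‖k‖ < 1 := by
      by_contra hk1
      push_neg at hk1
      have htend := hsum2.tendsto_atTop_zero
      have hev := htend.eventually (gt_mem_nhds (show (0:ℝ) < ‖β‖ ^ ((2:ℝ≥0∞).toReal) from
        Real.rpow_pos_of_pos (norm_pos_iff.mpr hβ0) _))
      obtain ⟨N, hN⟩ := hev.exists_forall_of_atTop
      have hterm := hN (N + 1) (Nat.le_succ N)
      have : ‖geomCoeff 1 β k (N + 1)‖ ^ ((2:ℝ≥0∞).toReal)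
          ≥ ‖β‖ ^ ((2:ℝ≥0∞).toReal) := by
        have hge : ‖geomCoeff 1 β k (N + 1)‖ ≥ ‖β‖ := by
          simp only [geomCoeff, if_neg (Nat.succ_ne_zero N), Nat.add_sub_cancel, norm_mul,
            norm_pow]
          nlinarith [one_le_pow₀ (n := N) hk1, norm_nonneg β, norm_nonneg k,
            pow_nonneg (norm_nonneg k) N]
        exact Real.rpow_le_rpow (norm_nonneg β) hge (by norm_num)
      linarith
    have hk2 : ‖k‖ ^ 2 < 1 := by nlinarith [norm_nonneg k]
    -- norm of T K_w squared
    have hnormTK : ‖T (kernel w)‖ ^ 2 = 1 + ‖β‖ ^ 2 * (1 - ‖k‖ ^ 2)⁻¹ := by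
      have h2' : ((2 : ℝ≥0∞).toReal) = ((2:ℕ):ℝ) := by norm_num
      have hrw := lp.norm_rpow_eq_tsum htoReal (T (kernel w))
      rw [h2'] at hrw
      simp only [Real.rpow_natCast] at hrw
      have hgeo : HasSum (fun n : ℕ => ‖β‖ ^ 2 * (‖k‖ ^ 2) ^ n) (‖β‖ ^ 2 * (1 - ‖k‖ ^ 2)⁻¹) :=
        (hasSum_geometric_of_lt_one (by positivity) hk2).mul_left _
      have hshift : HasSum (fun n : ℕ => ‖geomCoeff 1 β k (n + 1)‖ ^ 2)
          (‖β‖ ^ 2 * (1 - ‖k‖ ^ 2)⁻¹) := by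
        refine hgeo.congr_fun fun n => ?_
        simp only [geomCoeff, if_neg (Nat.succ_ne_zero n), Nat.add_sub_cancel, norm_mul,
          norm_pow]
        ring
      have hfull := (hasSum_nat_add_iff
        (f := fun n : ℕ => ‖geomCoeff 1 β k n‖ ^ 2) 1).mp hshift
      have h00 : ∑ i ∈ Finset.range 1, ‖geomCoeff 1 β k i‖ ^ 2 = 1 := by
        simp [geomCoeff]
      rw [h00] at hfull
      have htt : ∑' n : ℕ, ‖geomCoeff 1 β k n‖ ^ 2 = ‖β‖ ^ 2 * (1 - ‖k‖ ^ 2)⁻¹ + 1 :=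
        hfull.tsum_eq
      rw [hrw, tsum_congr (fun n => by rw [hco n] :
        ∀ n : ℕ, ‖(T (kernel w) : ∀ _ : ℕ, ℂ) n‖ ^ (2:ℕ) = ‖geomCoeff 1 β k n‖ ^ (2:ℕ)), htt]
      ring
    -- norm of the kernel at φ (ν w)
    have hνw : ‖ν w‖ < 1 := by rw [hν1]; exact hw
    have hφν : ‖φ (ν w)‖ < 1 := hself _ hνw
    have hnormK : ‖kernel (φ (ν w))‖ ^ 2 = (1 - ‖φ (ν w)‖ ^ 2)⁻¹ := norm_kernel_sq hφν
    -- the equation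
    have heq : 1 + ‖β‖ ^ 2 * (1 - ‖k‖ ^ 2)⁻¹ = (1 - ‖φ (ν w)‖ ^ 2)⁻¹ := by
      rw [← hnormTK, ← hnormK, H w hw]
    -- convert to the polynomial identity
    have hPne : c * ν w + d ≠ 0 := hden _ hνw
    have hφν' : φ (ν w) = a * ν w / (c * ν w + d) := by rw [hφ, hb]; ring_nf
    have hnφ : ‖φ (ν w)‖ ^ 2 = ‖a * w‖ ^ 2 / ‖c * ν w + d‖ ^ 2 := by
      rw [hφν', norm_div, div_pow]
      congr 2
      rw [norm_mul, norm_mul, hν1]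
    have hkn : ‖k‖ ^ 2 = ‖conj w * a - c‖ ^ 2 / ‖d‖ ^ 2 := by
      rw [hk_def, norm_div, div_pow]
    have hβn : ‖β‖ ^ 2 = ‖a * w‖ ^ 2 / ‖d‖ ^ 2 := by
      rw [hβ_def, norm_div, div_pow]
      congr 2
      rw [norm_mul, norm_mul, RCLike.norm_conj, mul_comm]
    set x := ‖a * w‖ ^ 2 with hx_def
    set P := ‖c * ν w + d‖ ^ 2 with hP_def
    set D := ‖d‖ ^ 2 with hD_def
    set s' := ‖conj w * a - c‖ ^ 2 with hs'_def
    have hx0 : 0 < x := by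
      rw [hx_def]
      exact pow_pos (norm_pos_iff.mpr (mul_ne_zero ha hw0)) 2
    have hP0 : 0 < P := by rw [hP_def]; exact pow_pos (norm_pos_iff.mpr hPne) 2
    have hD0 : 0 < D := by rw [hD_def]; exact pow_pos (norm_pos_iff.mpr hd) 2
    have hs1m : 0 < 1 - ‖k‖ ^ 2 := by linarith
    have ht1m : 0 < 1 - ‖φ (ν w)‖ ^ 2 := by nlinarith [norm_nonneg (φ (ν w))]
    rw [hkn, hβn, hnφ] at heq
    rw [hkn] at hs1m
    rw [hnφ] at ht1m
    -- now heq : 1 + (x/D) * (1 - s'/D)⁻¹ = (1 - x/P)⁻¹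
    have hDs : 0 < D - s' := by
      have h' := mul_pos hs1m hD0
      have : (1 - s' / D) * D = D - s' := by field_simp
      linarith [this ▸ h']
    have hPx : 0 < P - x := by
      have h' := mul_pos ht1m hP0
      have : (1 - x / P) * P = P - x := by field_simp
      linarith [this ▸ h']
    have hDs0 : D - s' ≠ 0 := ne_of_gt hDs
    have hPx0 : P - x ≠ 0 := ne_of_gt hPx
    have l1 : x / D * (1 - s' / D)⁻¹ = x / (D - s') := by
      rw [show (1:ℝ) - s' / D = (D - s') / D by field_simp, inv_div]
      rw [div_mul_div_comm]
      rw [div_eq_div_iff (mul_ne_zero (ne_of_gt hD0) hDs0) hDs0]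
      ring
    have l2 : ((1:ℝ) - x / P)⁻¹ = P / (P - x) := by
      rw [show (1:ℝ) - x / P = (P - x) / P by field_simp, inv_div]
    have heq2 : 1 + x / (D - s') = P / (P - x) := by rw [← l1, ← l2]; exact heq
    have l3 : P / (P - x) - 1 = x / (P - x) := by field_simp; ring
    have l4 : x / (D - s') = x / (P - x) := by rw [← l3, ← heq2]; ring
    have l5 := (div_eq_div_iff hDs0 hPx0).mp l4
    exact mul_left_cancel₀ (ne_of_gt hx0) l5
  -- Step C : c = 0
  have hc : c = 0 := by
    have h12 : ‖(1/2 : ℂ)‖ < 1 := by norm_num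
    have hm12 : ‖(-(1/2) : ℂ)‖ < 1 := by rw [norm_neg]; norm_num
    have e1 := E (1/2) h12 (by norm_num)
    have e2 := E (-(1/2)) hm12 (by norm_num)
    rw [hν2] at e2
    set u := ν (1/2 : ℂ) with hu_def
    have hcu : ‖c * u‖ ^ 2 = ‖c‖ ^ 2 * (1/4) := by
      rw [norm_mul, hu_def, hν1]
      have h2 : ‖(1/2 : ℂ)‖ = 1/2 := by norm_num
      rw [h2]; ring
    have hru : ‖u‖ = 1/2 := by rw [hu_def, hν1]; norm_num
    -- rewrite the four squared norms
    have r1 : ‖c * -u + d‖ ^ 2 = ‖-(c * u) + d‖ ^ 2 := by rw [show c * -u = -(c*u) by ring]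
    have r2 : ‖a * -(1/2 : ℂ)‖ ^ 2 = ‖a * (1/2 : ℂ)‖ ^ 2 := by
      rw [show a * -(1/2:ℂ) = -(a * (1/2:ℂ)) by ring, norm_neg]
    have hcj : conj (1/2 : ℂ) = 1/2 := by
      simp [Complex.ext_iff]
    have hcjm : conj (-(1/2) : ℂ) = -(1/2) := by
      simp [Complex.ext_iff]
    rw [hcj] at e1
    rw [hcjm, r1, r2] at e2
    have r3 : ‖-(1/2 : ℂ) * a - c‖ ^ 2 = ‖-((1/2:ℂ) * a) + -c‖ ^ 2 := by
      rw [show -(1/2:ℂ) * a - c = -((1/2:ℂ) * a) + -c by ring]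
    have r4 : ‖(1/2 : ℂ) * a - c‖ ^ 2 = ‖(1/2:ℂ) * a + -c‖ ^ 2 := by
      rw [show (1/2:ℂ) * a - c = (1/2:ℂ) * a + -c by ring]
    rw [r3] at e2
    rw [r4] at e1
    have p1 := parallelogram (c * u) d
    have p2 := parallelogram ((1/2:ℂ) * a) (-c)
    rw [norm_neg c] at p2
    have ha2 : ‖(1/2:ℂ) * a‖ ^ 2 = ‖a * (1/2:ℂ)‖ ^ 2 := by rw [mul_comm]
    rw [ha2] at p2
    have hcsq : ‖c‖ ^ 2 = 0 := by linarith [p1, p2, e1, e2, hcu]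
    exact norm_eq_zero.mp (pow_eq_zero_iff two_ne_zero |>.mp hcsq)
  -- Step D : conclusion
  have hα' : a / d ≠ 0 := div_ne_zero ha hd
  refine ⟨a / d, ?_, ?_⟩
  · by_contra hα
    push_neg at hα
    set z0 : ℂ := ((‖a/d‖⁻¹ : ℝ) : ℂ) with hz0def
    have hnz0 : ‖z0‖ = ‖a/d‖⁻¹ := by
      rw [hz0def, Complex.norm_real, Real.norm_eq_abs]
      exact abs_of_nonneg (inv_nonneg.mpr (norm_nonneg _))
    have hz0lt : ‖z0‖ < 1 := by
      rw [hnz0, inv_lt_one_iff₀]; right; exact hα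
    have h1 := hself z0 hz0lt
    have hφz0 : φ z0 = (a/d) * z0 := by
      rw [hφ z0, hb, hc, zero_mul, zero_add, add_zero, div_mul_eq_mul_div]
    rw [hφz0, norm_mul, hnz0, mul_inv_cancel₀ (norm_ne_zero_iff.mpr hα')] at h1
    exact lt_irrefl 1 h1
  · intro z hz
    rw [hφ z, hb, hc, zero_mul, zero_add, add_zero, div_mul_eq_mul_div]

end H2
namespace H2

lemma memℓp_mul_of_le {g : ℕ → ℂ} (hg : Memℓp g 2) {α : ℂ} (hα : ‖α‖ ≤ 1) :
    Memℓp (fun n => α ^ n * g n) 2 := by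
  have htoReal : (0:ℝ) < (2 : ℝ≥0∞).toReal := by norm_num
  rw [memℓp_gen_iff htoReal] at hg ⊢
  refine Summable.of_nonneg_of_le (fun n => ?_) (fun n => ?_) hg
  · positivity
  · refine Real.rpow_le_rpow (norm_nonneg _) ?_ (by norm_num)
    rw [norm_mul, norm_pow]
    calc ‖α‖ ^ n * ‖g n‖ ≤ 1 * ‖g n‖ :=
          mul_le_mul_of_nonneg_right (pow_le_one₀ (norm_nonneg _) hα) (norm_nonneg _)
      _ = ‖g n‖ := one_mul _

lemma memℓp_conj {g : ℕ → ℂ} (hg : Memℓp g 2) : Memℓp (fun n => conj (g n)) 2 := by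
  have htoReal : (0:ℝ) < (2 : ℝ≥0∞).toReal := by norm_num
  rw [memℓp_gen_iff htoReal] at hg ⊢
  refine hg.congr fun n => ?_
  rw [RCLike.norm_conj]

/-- multiplication by `αⁿ` on coefficients -/
def diagElem (α : ℂ) (hα : ‖α‖ ≤ 1) (f : H2) : H2 :=
  ⟨fun n => α ^ n * (f : ∀ _ : ℕ, ℂ) n, memℓp_mul_of_le (lp.memℓp f) hα⟩

lemma diagElem_apply (α : ℂ) (hα : ‖α‖ ≤ 1) (f : H2) (n : ℕ) :
    (diagElem α hα f : ∀ _ : ℕ, ℂ) n = α ^ n * (f : ∀ _ : ℕ, ℂ) n := rfl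

lemma eval_diagElem (α : ℂ) (hα : ‖α‖ ≤ 1) (f : H2) {z : ℂ} (hz : ‖z‖ < 1) :
    eval (diagElem α hα f) z = eval f (α * z) := by
  rw [eval, eval]
  refine tsum_congr fun n => ?_
  rw [diagElem_apply, mul_pow]
  ring

lemma compOp_eq_diag {φ : ℂ → ℂ} {T : H2 →L[ℂ] H2} (hT : IsCompOp φ T)
    {α : ℂ} (hα : ‖α‖ ≤ 1) (hlin : ∀ z : ℂ, ‖z‖ < 1 → φ z = α * z) (f : H2) :
    T f = diagElem α hα f := by
  refine eval_inj fun z hz => ?_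
  rw [hT f z hz, hlin z hz, eval_diagElem α hα f hz]

lemma adjoint_eq_diag {φ : ℂ → ℂ} {T : H2 →L[ℂ] H2} (hT : IsCompOp φ T)
    {α : ℂ} (hα : ‖α‖ ≤ 1) (hlin : ∀ z : ℂ, ‖z‖ < 1 → φ z = α * z) (f : H2) :
    (ContinuousLinearMap.adjoint T) f = diagElem (conj α) (by rwa [RCLike.norm_conj]) f := by
  refine ext_inner_right ℂ fun g => ?_
  rw [ContinuousLinearMap.adjoint_inner_left, compOp_eq_diag hT hα hlin g,
    inner_eq_tsum', inner_eq_tsum']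
  refine tsum_congr fun n => ?_
  rw [diagElem_apply, diagElem_apply]
  simp only [map_mul, map_pow, Complex.conj_conj]
  ring

/-- the element `J_μ f` -/
def jmuElem (μ : ℂ) (hμ : ‖μ‖ = 1) (f : H2) : H2 :=
  ⟨fun n => conj μ ^ n * conj ((f : ∀ _ : ℕ, ℂ) n),
    memℓp_mul_of_le (memℓp_conj (lp.memℓp f)) (by rw [RCLike.norm_conj, hμ])⟩

lemma jmuElem_apply (μ : ℂ) (hμ : ‖μ‖ = 1) (f : H2) (n : ℕ) :
    (jmuElem μ hμ f : ∀ _ : ℕ, ℂ) n = conj μ ^ n * conj ((f : ∀ _ : ℕ, ℂ) n) := rfl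

lemma jmu_eq {μ : ℂ} (hμ : ‖μ‖ = 1) {C : H2 → H2} (hCμ : IsJmu μ C) (f : H2) :
    C f = jmuElem μ hμ f := by
  refine eval_inj fun z hz => ?_
  have hz' : ‖μ * conj z‖ < 1 := by rw [norm_mul, hμ, RCLike.norm_conj, one_mul]; exact hz
  rw [hCμ f z hz, eval, eval, conj_tsum]
  refine tsum_congr fun n => ?_
  rw [jmuElem_apply]
  simp only [map_mul, map_pow, Complex.conj_conj]
  ring

lemma normal_of_linear {φ : ℂ → ℂ} {T : H2 →L[ℂ] H2} (hT : IsCompOp φ T)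
    {α : ℂ} (hα : ‖α‖ ≤ 1) (hlin : ∀ z : ℂ, ‖z‖ < 1 → φ z = α * z) :
    IsNormalOp T := by
  refine ContinuousLinearMap.ext fun f => ?_
  rw [ContinuousLinearMap.comp_apply, ContinuousLinearMap.comp_apply,
    compOp_eq_diag hT hα hlin f, adjoint_eq_diag hT hα hlin,
    adjoint_eq_diag hT hα hlin f, compOp_eq_diag hT hα hlin]
  refine lp.ext (funext fun n => ?_)
  rw [diagElem_apply, diagElem_apply, diagElem_apply, diagElem_apply]
  ring

lemma cnormal_of_linear {φ : ℂ → ℂ} {T : H2 →L[ℂ] H2} (hT : IsCompOp φ T)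
    {α : ℂ} (hα : ‖α‖ ≤ 1) (hlin : ∀ z : ℂ, ‖z‖ < 1 → φ z = α * z)
    {μ : ℂ} (hμ : ‖μ‖ = 1) {C : H2 → H2} (hCμ : IsJmu μ C) :
    CNormal C T := by
  intro x
  have hμ1 : conj μ * μ = 1 := by
    rw [mul_comm, Complex.mul_conj, Complex.normSq_eq_norm_sq, hμ]
    norm_num
  have hα' : ‖conj α‖ ≤ 1 := by rwa [RCLike.norm_conj]
  rw [jmu_eq hμ hCμ x, compOp_eq_diag hT hα hlin, adjoint_eq_diag hT hα hlin,
    jmu_eq hμ hCμ, adjoint_eq_diag hT hα hlin x, compOp_eq_diag hT hα hlin]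
  refine lp.ext (funext fun n => ?_)
  rw [jmuElem_apply, diagElem_apply, diagElem_apply, jmuElem_apply, diagElem_apply,
    diagElem_apply]
  have h1 : conj μ ^ n * μ ^ n = 1 := by rw [← mul_pow, hμ1, one_pow]
  simp only [map_mul, map_pow, Complex.conj_conj]
  linear_combination (α ^ n * conj α ^ n * (x : ∀ _ : ℕ, ℂ) n) * h1

lemma H_of_normal {φ : ℂ → ℂ} {T : H2 →L[ℂ] H2} (hT : IsCompOp φ T)
    (hself : ∀ z : ℂ, ‖z‖ < 1 → ‖φ z‖ < 1) (hN : IsNormalOp T)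
    {w : ℂ} (hw : ‖w‖ < 1) : ‖T (kernel w)‖ = ‖kernel (φ w)‖ := by
  rw [norm_adjoint_eq_of_normal hN (kernel w), adjoint_kernel hT hself hw]

lemma H_of_cnormal {φ : ℂ → ℂ} {T : H2 →L[ℂ] H2} (hT : IsCompOp φ T)
    (hself : ∀ z : ℂ, ‖z‖ < 1 → ‖φ z‖ < 1)
    {μ : ℂ} (hμ : ‖μ‖ = 1) {C : H2 → H2} (hC : IsConjugation C) (hCμ : IsJmu μ C)
    (hCN : CNormal C T) {w : ℂ} (hw : ‖w‖ < 1) :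
    ‖T (kernel w)‖ = ‖kernel (φ (μ * conj w))‖ := by
  have hμ1 : μ * conj μ = 1 := by
    rw [Complex.mul_conj, Complex.normSq_eq_norm_sq, hμ]
    norm_num
  set v := μ * conj w with hv_def
  have hv : ‖v‖ < 1 := by rw [hv_def, norm_mul, hμ, RCLike.norm_conj, one_mul]; exact hw
  have hkey := norm_comp_conj_of_cnormal hC hCN (kernel v)
  rw [adjoint_kernel hT hself hv, conj_kernel hμ hCμ hv] at hkey
  have hvw : μ * conj v = w := by
    rw [hv_def, map_mul, Complex.conj_conj, ← mul_assoc, hμ1, one_mul]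
  rw [hvw] at hkey
  exact hkey

end H2


/-- Let `φ(z) = (az+b)/(cz+d)` be a linear fractional self-map of the unit disk and `|μ| = 1`.
Then `C_φ` is `J_μ`-normal iff `C_φ` is normal (equivalently, iff `φ(z) = αz` with `|α| ≤ 1`). -/
theorem stmt0 (a b c d μ : ℂ) (φ : ℂ → ℂ)
    (hφ : ∀ z : ℂ, φ z = (a * z + b) / (c * z + d))
    (hdet : a * d - b * c ≠ 0)
    (hden : ∀ z : ℂ, ‖z‖ < 1 → c * z + d ≠ 0)
    (hself : ∀ z : ℂ, ‖z‖ < 1 → ‖φ z‖ < 1)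
    (hμ : ‖μ‖ = 1)
    (T : H2 →L[ℂ] H2) (hT : H2.IsCompOp φ T)
    (C : H2 → H2) (hC : H2.IsConjugation C) (hCμ : H2.IsJmu μ C) :
    (H2.CNormal C T ↔ H2.IsNormalOp T) ∧
      (H2.IsNormalOp T ↔ ∃ α : ℂ, ‖α‖ ≤ 1 ∧ ∀ z : ℂ, ‖z‖ < 1 → φ z = α * z) := by
  have hν1 : ∀ w : ℂ, ‖μ * conj w‖ = ‖w‖ := fun w => by
    rw [norm_mul, hμ, RCLike.norm_conj, one_mul]
  have hν2 : ∀ w : ℂ, μ * conj (-w) = -(μ * conj w) := fun w => by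
    rw [map_neg]; ring
  have lin_of_normal : H2.IsNormalOp T →
      ∃ α : ℂ, ‖α‖ ≤ 1 ∧ ∀ z : ℂ, ‖z‖ < 1 → φ z = α * z := fun hN =>
    H2.linear_of_norm_eq a b c d φ hφ hdet hden hself T hT (fun w => w)
      (fun _ => rfl) (fun _ => rfl) (fun w hw => H2.H_of_normal hT hself hN hw)
  have lin_of_cnormal : H2.CNormal C T →
      ∃ α : ℂ, ‖α‖ ≤ 1 ∧ ∀ z : ℂ, ‖z‖ < 1 → φ z = α * z := fun hCN =>
    H2.linear_of_norm_eq a b c d φ hφ hdet hden hself T hT (fun w => μ * conj w)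
      hν1 hν2 (fun w hw => H2.H_of_cnormal hT hself hμ hC hCμ hCN hw)
  constructor
  · constructor
    · intro hCN
      obtain ⟨α, hα, hlin⟩ := lin_of_cnormal hCN
      exact H2.normal_of_linear hT hα hlin
    · intro hN
      obtain ⟨α, hα, hlin⟩ := lin_of_normal hN
      exact H2.cnormal_of_linear hT hα hlin hμ hCμ
  · constructor
    · exact lin_of_normal
    · rintro ⟨α, hα, hlin⟩
      exact H2.normal_of_linear hT hα hlin
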